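/- Assume W_0 satisfies (Icvbis): for every δ > 0 there exists c_δ > 0 such that for all ξ = (ξ₁|ξ₂) ∈ M^{3×2}, if |ξ₁ ∧ ξ₂| ≥ δ then W_0(ξ) ≤ c_δ(1+|ξ|^p). Then the rank one convex envelope RW_0 of W_0 satisfies: (i) there exists c > 0 such that RW_0(ξ) ≤ c(1+|ξ|^p) for all ξ ∈ M^{3×2}; and (ii) RW_0 is continuous. -/

import Mathlib

open scoped ENNReal
open MeasureTheory Filter

noncomputable section

attribute [local instance] Matrix.normedAddCommGroup

/-- `juxt ξ ζ` is the 3×3 matrix whose first two columns are the columns of the 3×2 matrix `ξ`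
and whose third column is `ζ`, i.e. the matrix denoted `(ξ|ζ)` in the paper. -/
def juxt (ξ : Matrix (Fin 3) (Fin 2) ℝ) (ζ : Fin 3 → ℝ) : Matrix (Fin 3) (Fin 3) ℝ :=
  Matrix.of fun i k => Fin.lastCases (ζ i) (fun j => ξ i j) k

/-- `W0 W ξ = inf_{ζ ∈ ℝ³} W (ξ|ζ)`. -/
def W0 (W : Matrix (Fin 3) (Fin 3) ℝ → ℝ≥0∞) (ξ : Matrix (Fin 3) (Fin 2) ℝ) : ℝ≥0∞ :=
  ⨅ ζ : Fin 3 → ℝ, W (juxt ξ ζ)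

/-- A function `f : M^{3×2} → [0,+∞]` is rank one convex. -/
def RankOneConvex (f : Matrix (Fin 3) (Fin 2) ℝ → ℝ≥0∞) : Prop :=
  ∀ α : ℝ, α ∈ Set.Ioo (0 : ℝ) 1 → ∀ ξ ξ' : Matrix (Fin 3) (Fin 2) ℝ, (ξ - ξ').rank = 1 →
    f (α • ξ + (1 - α) • ξ') ≤ ENNReal.ofReal α * f ξ + ENNReal.ofReal (1 - α) * f ξ'

/-- The rank one convex envelope `Rf` of `f`: the pointwise supremum of all rank one
convex functions `g ≤ f`. -/
def REnv (f : Matrix (Fin 3) (Fin 2) ℝ → ℝ≥0∞) (ξ : Matrix (Fin 3) (Fin 2) ℝ) : ℝ≥0∞ :=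
  ⨆ g ∈ {g : Matrix (Fin 3) (Fin 2) ℝ → ℝ≥0∞ | RankOneConvex g ∧ ∀ η, g η ≤ f η}, g ξ


abbrev M32 := Matrix (Fin 3) (Fin 2) ℝ

lemma rank_sbm {i : Fin 3} {j : Fin 2} {c : ℝ} (hc : c ≠ 0) :
    (Matrix.single i j c).rank = 1 := by
  have h1 : Function.update (0 : Fin 3 → ℝ) i c ≠ 0 := by
    intro h
    have := congrFun h i
    simp at this
    exact hc this
  have hrange : LinearMap.range (Matrix.single i j c).mulVecLin
      = Submodule.span ℝ {Function.update (0 : Fin 3 → ℝ) i c} := by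
    apply le_antisymm
    · rintro v ⟨x, rfl⟩
      rw [Matrix.mulVecLin_apply, Matrix.single_mulVec]
      have : Function.update (0 : Fin 3 → ℝ) i (c * x j)
          = (x j) • Function.update (0 : Fin 3 → ℝ) i c := by
        ext k
        rcases eq_or_ne k i with rfl | h
        · simp [Function.update, mul_comm]
        · simp [Function.update, h]
      rw [this]
      exact Submodule.smul_mem _ _ (Submodule.mem_span_singleton_self _)
    · rw [Submodule.span_le, Set.singleton_subset_iff]
      exact ⟨Function.update (0 : Fin 2 → ℝ) j 1, by
        rw [Matrix.mulVecLin_apply, Matrix.single_mulVec]; simp⟩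
  rw [Matrix.rank, hrange, finrank_span_singleton h1]

lemma rankOneConvex_REnv (f : M32 → ℝ≥0∞) : RankOneConvex (REnv f) := by
  intro α hα ξ ξ' hr
  refine iSup₂_le fun g hg => ?_
  calc g (α • ξ + (1 - α) • ξ') ≤ ENNReal.ofReal α * g ξ + ENNReal.ofReal (1 - α) * g ξ' :=
        hg.1 α hα ξ ξ' hr
    _ ≤ ENNReal.ofReal α * REnv f ξ + ENNReal.ofReal (1 - α) * REnv f ξ' := by
        gcongr
        · exact le_iSup₂ (f := fun g _ => g ξ) g hg
        · exact le_iSup₂ (f := fun g _ => g ξ') g hg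

lemma REnv_le (f : M32 → ℝ≥0∞) (ξ : M32) : REnv f ξ ≤ f ξ :=
  iSup₂_le fun _ hg => hg.2 ξ

lemma midpoint_le {F : M32 → ℝ≥0∞} (hF : RankOneConvex F) (ξ : M32)
    (i : Fin 3) (j : Fin 2) (t : ℝ) (ht : t ≠ 0) :
    F ξ ≤ ENNReal.ofReal (1/2) * F (ξ + Matrix.single i j t)
        + ENNReal.ofReal (1/2) * F (ξ - Matrix.single i j t) := by
  set η := Matrix.single i j t with hη
  have hrank : ((ξ + η) - (ξ - η)).rank = 1 := by
    have : (ξ + η) - (ξ - η) = Matrix.single i j (t + t) := by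
      rw [Matrix.single_add, ← hη]; abel
    rw [this]
    exact rank_sbm (by intro h; apply ht; linarith)
  have h := hF (1/2) (by norm_num) (ξ + η) (ξ - η) hrank
  have hcomb : ((1:ℝ)/2) • (ξ + η) + (1 - (1:ℝ)/2) • (ξ - η) = ξ := by
    module
  rw [hcomb] at h
  convert h using 3 <;> norm_num

lemma col_norm_le (ξ : M32) (j : Fin 2) : ‖fun i => ξ i j‖ ≤ ‖ξ‖ := by
  refine pi_norm_le_iff_of_nonneg (norm_nonneg ξ) |>.2 fun i => ?_
  exact Matrix.norm_entry_le_entrywise_sup_norm ξ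

lemma abs_mul_sub_mul {a b c d U V : ℝ} (ha : |a| ≤ U) (hb : |b| ≤ V)
    (hc : |c| ≤ U) (hd : |d| ≤ V) : |a * b - c * d| ≤ 2 * U * V := by
  have h1 : |a * b - c * d| ≤ |a * b| + |c * d| := by
    rw [sub_eq_add_neg]
    exact (abs_add_le _ _).trans (by rw [abs_neg])
  rw [abs_mul, abs_mul] at h1
  nlinarith [abs_nonneg a, abs_nonneg b, abs_nonneg c, abs_nonneg d]

lemma cross_norm_le (u v : Fin 3 → ℝ) : ‖crossProduct u v‖ ≤ 2 * ‖u‖ * ‖v‖ := by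
  have hu : ∀ i, |u i| ≤ ‖u‖ := fun i => norm_le_pi_norm u i
  have hv : ∀ i, |v i| ≤ ‖v‖ := fun i => norm_le_pi_norm v i
  have h0 : (0:ℝ) ≤ ‖u‖ := norm_nonneg u
  have h0' : (0:ℝ) ≤ ‖v‖ := norm_nonneg v
  refine pi_norm_le_iff_of_nonneg (by positivity) |>.2 fun i => ?_
  fin_cases i <;>
    simp only [cross_apply, Real.norm_eq_abs, Matrix.cons_val_zero, Matrix.cons_val_one,
      Matrix.head_cons, Matrix.cons_val_two, Matrix.tail_cons] <;>
    exact abs_mul_sub_mul (hu _) (hv _) (hu _) (hv _)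

lemma exists_good_dir (v : Fin 3 → ℝ) :
    ∃ m : Fin 3, ‖v‖ ≤ ‖crossProduct (Pi.single m 1) v‖ := by
  have hcomp : ∀ (w : Fin 3 → ℝ) i, |w i| ≤ ‖w‖ := fun w i => norm_le_pi_norm w i
  rcases le_or_gt (|v 2|) (max (|v 0|) (|v 1|)) with h | h
  · refine ⟨2, pi_norm_le_iff_of_nonneg (norm_nonneg _) |>.2 fun i => ?_⟩
    have h0 : (crossProduct (Pi.single (2:Fin 3) (1:ℝ))) v 0 = -(v 1) := by
      simp [cross_apply, Pi.single_apply]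
    have h1 : (crossProduct (Pi.single (2:Fin 3) (1:ℝ))) v 1 = v 0 := by
      simp [cross_apply, Pi.single_apply]
    have e0 := hcomp ((crossProduct (Pi.single (2:Fin 3) (1:ℝ))) v) 0
    have e1 := hcomp ((crossProduct (Pi.single (2:Fin 3) (1:ℝ))) v) 1
    rw [h0] at e0; rw [h1] at e1
    simp only [Real.norm_eq_abs, abs_neg] at e0 e1 ⊢
    fin_cases i
    · exact e1
    · exact e0
    · simp only [Fin.isValue]
      rcases max_cases (|v 0|) (|v 1|) with ⟨he, _⟩ | ⟨he, _⟩ <;> rw [he] at h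
      · exact le_trans h e1
      · exact le_trans h e0
  · refine ⟨0, pi_norm_le_iff_of_nonneg (norm_nonneg _) |>.2 fun i => ?_⟩
    have h1 : (crossProduct (Pi.single (0:Fin 3) (1:ℝ))) v 1 = -(v 2) := by
      simp [cross_apply, Pi.single_apply]
    have e1 := hcomp ((crossProduct (Pi.single (0:Fin 3) (1:ℝ))) v) 1
    rw [h1] at e1
    simp only [Real.norm_eq_abs, abs_neg] at e1 ⊢
    fin_cases i
    · exact le_trans (le_trans (le_max_left _ _) h.le) e1
    · exact le_trans (le_trans (le_max_right _ _) h.le) e1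
    · exact e1

lemma one_add_rpow_le {p r x K : ℝ} (hp : 1 ≤ p) (hr : 0 ≤ r) (hx : 0 ≤ x) (hK : 1 ≤ K)
    (h : x ≤ K * max 1 r) : 1 + x ^ p ≤ (1 + K ^ p) * (1 + r ^ p) := by
  have hp0 : 0 ≤ p := by linarith
  have hKp : 1 ≤ K ^ p := Real.one_le_rpow hK hp0
  have hrp : 0 ≤ r ^ p := Real.rpow_nonneg hr p
  have hxp : x ^ p ≤ K ^ p * max 1 (r ^ p) := by
    calc x ^ p ≤ (K * max 1 r) ^ p :=
          Real.rpow_le_rpow hx h hp0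
      _ = K ^ p * (max 1 r) ^ p := Real.mul_rpow (by linarith) (le_max_of_le_left zero_le_one)
      _ ≤ K ^ p * max 1 (r ^ p) := by
          rcases le_total r 1 with h1 | h1
          · rw [max_eq_left h1, Real.one_rpow]
            exact mul_le_mul_of_nonneg_left (le_max_left _ _) (by linarith)
          · rw [max_eq_right h1]
            exact mul_le_mul_of_nonneg_left (le_max_right _ _) (by linarith)
  have hmax : max 1 (r ^ p) ≤ 1 + r ^ p := by
    rcases max_cases 1 (r ^ p) with ⟨he, _⟩ | ⟨he, _⟩ <;> rw [he] <;> linarith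
  nlinarith [mul_le_mul_of_nonneg_left hmax (by linarith : (0:ℝ) ≤ K ^ p)]

lemma lip1d {g : ℝ → ℝ} (hg : ConvexOn ℝ Set.univ g) (hg0 : ∀ x, 0 ≤ g x)
    {a M : ℝ} (hM : ∀ x ∈ Set.Icc (a-3) (a+3), g x ≤ M)
    {y z : ℝ} (hy : y ∈ Set.Icc (a-1) (a+1)) (hz : z ∈ Set.Icc (a-1) (a+1)) :
    |g z - g y| ≤ M * |z - y| := by
  have key : ∀ y z : ℝ, y ∈ Set.Icc (a-1) (a+1) → z ∈ Set.Icc (a-1) (a+1) → y < z →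
      |g z - g y| ≤ M * (z - y) := by
    intro y z hy hz hyz
    have hM0 : 0 ≤ M := le_trans (hg0 a) (hM a (by constructor <;> linarith))
    have hup : g z - g y ≤ M * (z - y) := by
      have h1 := hg.slope_mono_adjacent (Set.mem_univ y) (Set.mem_univ (a+3)) hyz
        (by linarith [hz.2] : z < a + 3)
      rw [div_le_div_iff₀ (by linarith) (by linarith [hz.2])] at h1
      have hb : g (a+3) ≤ M := hM _ (by constructor <;> linarith)
      nlinarith [hg0 z, hg0 y, hz.2, hy.1, mul_nonneg hM0 (by linarith : (0:ℝ) ≤ z - y)]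
    have hdown : g y - g z ≤ M * (z - y) := by
      have h1 := hg.slope_mono_adjacent (Set.mem_univ (a-3)) (Set.mem_univ z)
        (by linarith [hy.1] : a - 3 < y) hyz
      rw [div_le_div_iff₀ (by linarith [hy.1]) (by linarith)] at h1
      have hb : g (a-3) ≤ M := hM _ (by constructor <;> linarith)
      nlinarith [hg0 y, hg0 z, hg0 (a-3), hy.1, hz.2,
        mul_nonneg hM0 (by linarith : (0:ℝ) ≤ z - y)]
    rw [abs_le]
    constructor <;> linarith
  rcases lt_trichotomy y z with h | rfl | h
  · rw [abs_of_nonneg (by linarith : (0:ℝ) ≤ z - y)]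
    exact key y z hy hz h
  · simp
  · rw [abs_sub_comm, abs_sub_comm z y, abs_of_nonneg (by linarith : (0:ℝ) ≤ y - z)]
    exact key z y hz hy h

lemma slice_convexOn {G : M32 → ℝ≥0∞} (hG : RankOneConvex G) (hfin : ∀ ξ, G ξ ≠ ⊤)
    (B : M32) (i : Fin 3) (j : Fin 2) :
    ConvexOn ℝ Set.univ
      (fun t : ℝ => (G (B + t • Matrix.single i j 1)).toReal) := by
  refine ⟨convex_univ, fun s _ t _ a b ha hb hab => ?_⟩
  simp only [smul_eq_mul]
  rcases eq_or_ne s t with rfl | hst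
  · have h1 : a * s + b * s = s := by rw [← add_mul, hab, one_mul]
    rw [h1]
    nlinarith [ENNReal.toReal_nonneg (a := G (B + s • Matrix.single i j 1))]
  rcases eq_or_lt_of_le ha with rfl | ha'
  · have hb1 : b = 1 := by linarith
    simp [hb1]
  rcases eq_or_lt_of_le hb with rfl | hb'
  · have ha1 : a = 1 := by linarith
    simp [ha1]
  set E := Matrix.single i j (1:ℝ) with hE
  set X := B + s • E with hX
  set Y := B + t • E with hY
  have hrank : (X - Y).rank = 1 := by
    have hXY : X - Y = Matrix.single i j (s - t) := by
      rw [hX, hY, hE]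
      ext i' j'
      simp [Matrix.single, Matrix.smul_apply, smul_eq_mul]
      split <;> ring
    rw [hXY]
    exact rank_sbm (sub_ne_zero.2 hst)
  have hcomb : a • X + (1 - a) • Y = B + (a * s + b * t) • E := by
    have h1 : (1:ℝ) - a = b := by linarith
    rw [h1]
    have h2 : a • X + b • Y = (a + b) • B + (a * s + b * t) • E := by
      rw [hX, hY]; module
    rw [h2, hab, one_smul]
  have h := hG a ⟨ha', by linarith⟩ X Y hrank
  rw [hcomb] at h
  have h1a : (1:ℝ) - a = b := by linarith
  rw [h1a] at h
  have hXfin : ENNReal.ofReal a * G X ≠ ⊤ := ENNReal.mul_ne_top ENNReal.ofReal_ne_top (hfin X)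
  have hYfin : ENNReal.ofReal b * G Y ≠ ⊤ := ENNReal.mul_ne_top ENNReal.ofReal_ne_top (hfin Y)
  have := ENNReal.toReal_mono (ENNReal.add_ne_top.2 ⟨hXfin, hYfin⟩) h
  rwa [ENNReal.toReal_add hXfin hYfin, ENNReal.toReal_mul, ENNReal.toReal_mul,
    ENNReal.toReal_ofReal ha, ENNReal.toReal_ofReal hb] at this

lemma sub_sbm (ξ : M32) (i : Fin 3) (j : Fin 2) (t : ℝ) :
    ξ - Matrix.single i j t = ξ + Matrix.single i j (-t) := by
  ext i' j'
  simp only [Matrix.sub_apply, Matrix.add_apply, Matrix.single, Matrix.of_apply]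
  split <;> ring

lemma norm_sbm_le (i : Fin 3) (j : Fin 2) (t : ℝ) :
    ‖Matrix.single i j t‖ ≤ |t| := by
  refine (Matrix.norm_le_iff (abs_nonneg t)).2 fun i' j' => ?_
  simp only [Matrix.single, Matrix.of_apply, Real.norm_eq_abs]
  split
  · exact le_rfl
  · simpa using abs_nonneg t

lemma half_half {A B : ℝ≥0∞} {X : ℝ} (hX : 0 ≤ X)
    (hA : A ≤ ENNReal.ofReal X) (hB : B ≤ ENNReal.ofReal X) :
    ENNReal.ofReal (1/2) * A + ENNReal.ofReal (1/2) * B ≤ ENNReal.ofReal X := by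
  calc ENNReal.ofReal (1/2) * A + ENNReal.ofReal (1/2) * B
      ≤ ENNReal.ofReal (1/2) * ENNReal.ofReal X + ENNReal.ofReal (1/2) * ENNReal.ofReal X := by
        gcongr
    _ = ENNReal.ofReal ((1/2) * X + (1/2) * X) := by
        rw [← ENNReal.ofReal_mul (by norm_num), ← ENNReal.ofReal_add (by positivity) (by positivity)]
    _ = ENNReal.ofReal X := by rw [show (1/2) * X + (1/2) * X = X by ring]

/-- Lemma 5.2 (Ben Belgacem): if `W₀` satisfies (Icvbis) then the rank one convex envelope
`RW₀` has `p`-polynomial growth and is continuous. -/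
theorem REnv_growth_and_continuous
    (p C : ℝ) (hp : 1 < p) (hC : 0 < C)
    (W : Matrix (Fin 3) (Fin 3) ℝ → ℝ≥0∞)
    (hWcont : Continuous W)
    (hWcoer : ∀ F : Matrix (Fin 3) (Fin 3) ℝ, ENNReal.ofReal (C * ‖F‖ ^ p) ≤ W F)
    (hIcvbis : ∀ δ : ℝ, 0 < δ → ∃ c : ℝ, 0 < c ∧ ∀ ξ : Matrix (Fin 3) (Fin 2) ℝ,
      δ ≤ ‖crossProduct (fun i => ξ i 0) (fun i => ξ i 1)‖ →
      W0 W ξ ≤ ENNReal.ofReal (c * (1 + ‖ξ‖ ^ p))) :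
    (∃ c : ℝ, 0 < c ∧ ∀ ξ : Matrix (Fin 3) (Fin 2) ℝ,
      REnv (W0 W) ξ ≤ ENNReal.ofReal (c * (1 + ‖ξ‖ ^ p))) ∧
    Continuous (REnv (W0 W)) := by
  obtain ⟨c₀, hc₀, hc⟩ := hIcvbis 1 one_pos
  set G := REnv (W0 W) with hGdef
  have hG : RankOneConvex G := rankOneConvex_REnv _
  have hGle : ∀ ξ, G ξ ≤ W0 W ξ := REnv_le _
  have hp1 : (1:ℝ) ≤ p := hp.le
  have h4p : (1:ℝ) ≤ (4:ℝ) ^ p := Real.one_le_rpow (by norm_num) (by linarith)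
  have h3p : (1:ℝ) ≤ (3:ℝ) ^ p := Real.one_le_rpow (by norm_num) (by linarith)
  -- Step A
  have hA : ∀ ξ : M32, 1 ≤ ‖fun i => ξ i 1‖ →
      G ξ ≤ ENNReal.ofReal (c₀ * (1 + 4 ^ p) * (1 + ‖ξ‖ ^ p)) := by
    intro ξ hv1
    set u : Fin 3 → ℝ := fun i => ξ i 0 with hu
    set v : Fin 3 → ℝ := fun i => ξ i 1 with hv
    obtain ⟨m, hm⟩ := exists_good_dir v
    have hvpos : (0:ℝ) < ‖v‖ := by linarith
    have hun : ‖u‖ ≤ ‖ξ‖ := col_norm_le ξ 0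
    have hvn : ‖v‖ ≤ ‖ξ‖ := col_norm_le ξ 1
    have hξ1 : (1:ℝ) ≤ ‖ξ‖ := le_trans hv1 hvn
    set t : ℝ := 1 / ‖v‖ + 2 * ‖u‖ with htdef
    have ht0 : 0 < t := by positivity
    have hkey : ∀ τ : ℝ, |τ| = t →
        G (ξ + Matrix.single m 0 τ)
          ≤ ENNReal.ofReal (c₀ * (1 + 4 ^ p) * (1 + ‖ξ‖ ^ p)) := by
      intro τ hτ
      set Z := ξ + Matrix.single m 0 τ with hZ
      have hcol0 : (fun i => Z i 0) = u + τ • (Pi.single m 1 : Fin 3 → ℝ) := by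
        ext i
        simp only [hZ, Matrix.add_apply, Matrix.single, Matrix.of_apply, Pi.add_apply,
          Pi.smul_apply, Pi.single_apply, smul_eq_mul, hu]
        rcases eq_or_ne m i with rfl | h
        · simp
        · simp [h, Ne.symm h]
      have hcol1 : (fun i => Z i 1) = v := by
        ext i
        simp [hZ, Matrix.add_apply, Matrix.single, hv]
      have hcross : crossProduct (fun i => Z i 0) (fun i => Z i 1)
          = crossProduct u v + τ • crossProduct (Pi.single m 1) v := by
        rw [hcol0, hcol1]
        simp [map_add, _root_.map_smul, LinearMap.add_apply, LinearMap.smul_apply]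
      have hcr : 1 ≤ ‖crossProduct (fun i => Z i 0) (fun i => Z i 1)‖ := by
        rw [hcross]
        have h1 : ‖τ • crossProduct (Pi.single m 1) v‖
            ≤ ‖crossProduct u v + τ • crossProduct (Pi.single m 1) v‖ + ‖crossProduct u v‖ := by
          rw [add_comm (crossProduct u v)]
          exact norm_le_add_norm_add _ _
        rw [norm_smul, Real.norm_eq_abs, hτ] at h1
        have h2 : ‖crossProduct u v‖ ≤ 2 * ‖u‖ * ‖v‖ := cross_norm_le u v
        have h3 : t * ‖v‖ ≤ t * ‖crossProduct (Pi.single m 1) v‖ :=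
          mul_le_mul_of_nonneg_left hm ht0.le
        have h4 : t * ‖v‖ = 1 + 2 * ‖u‖ * ‖v‖ := by
          rw [htdef]
          field_simp
        linarith
      have hZn : ‖Z‖ ≤ ‖ξ‖ + t := by
        calc ‖Z‖ ≤ ‖ξ‖ + ‖Matrix.single m 0 τ‖ := norm_add_le _ _
          _ ≤ ‖ξ‖ + |τ| := by gcongr; exact norm_sbm_le m 0 τ
          _ = ‖ξ‖ + t := by rw [hτ]
      have hbound : 1 + ‖Z‖ ^ p ≤ (1 + 4 ^ p) * (1 + ‖ξ‖ ^ p) := by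
        refine one_add_rpow_le hp1 (norm_nonneg ξ) (norm_nonneg Z) (by norm_num) ?_
        have h5 : 1 / ‖v‖ ≤ 1 := by
          rw [div_le_one hvpos]; exact hv1
        have ht' : t ≤ 1 + 2 * ‖ξ‖ := by
          rw [htdef]; linarith
        have hmax : max 1 ‖ξ‖ = ‖ξ‖ := max_eq_right hξ1
        rw [hmax]
        linarith
      calc G Z ≤ W0 W Z := hGle Z
        _ ≤ ENNReal.ofReal (c₀ * (1 + ‖Z‖ ^ p)) := hc Z hcr
        _ ≤ ENNReal.ofReal (c₀ * (1 + 4 ^ p) * (1 + ‖ξ‖ ^ p)) := by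
            refine ENNReal.ofReal_le_ofReal ?_
            calc c₀ * (1 + ‖Z‖ ^ p) ≤ c₀ * ((1 + 4 ^ p) * (1 + ‖ξ‖ ^ p)) :=
                  mul_le_mul_of_nonneg_left hbound hc₀.le
              _ = c₀ * (1 + 4 ^ p) * (1 + ‖ξ‖ ^ p) := by ring
    have hmid := midpoint_le hG ξ m 0 t ht0.ne'
    rw [sub_sbm] at hmid
    refine hmid.trans ?_
    refine half_half (by positivity) (hkey t (abs_of_pos ht0)) (hkey (-t) ?_)
    rw [abs_neg, abs_of_pos ht0]
  -- Step B
  have hB : ∀ ξ : M32,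
      G ξ ≤ ENNReal.ofReal (c₀ * (1 + 4 ^ p) * (1 + 3 ^ p) * (1 + ‖ξ‖ ^ p)) := by
    intro ξ
    set v : Fin 3 → ℝ := fun i => ξ i 1 with hv
    have hvn : ‖v‖ ≤ ‖ξ‖ := col_norm_le ξ 1
    set s : ℝ := 1 + ‖v‖ with hs
    have hs0 : 0 < s := by positivity
    have hkey : ∀ τ : ℝ, |τ| = s →
        G (ξ + Matrix.single 0 1 τ)
          ≤ ENNReal.ofReal (c₀ * (1 + 4 ^ p) * (1 + 3 ^ p) * (1 + ‖ξ‖ ^ p)) := by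
      intro τ hτ
      set Z := ξ + Matrix.single 0 1 τ with hZ
      have hcol1 : 1 ≤ ‖fun i => Z i 1‖ := by
        have h0 : Z 0 1 = ξ 0 1 + τ := by
          simp [hZ, Matrix.add_apply, Matrix.single]
        have h1 : |ξ 0 1 + τ| ≤ ‖fun i => Z i 1‖ := by
          have := norm_le_pi_norm (fun i => Z i 1) 0
          rwa [Real.norm_eq_abs, h0] at this
        have h2 : |ξ 0 1| ≤ ‖v‖ := by
          have := norm_le_pi_norm v 0
          rwa [Real.norm_eq_abs] at this
        have h3 : s - |ξ 0 1| ≤ |ξ 0 1 + τ| := by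
          have habs := abs_add_le (ξ 0 1 + τ) (-(ξ 0 1))
          rw [abs_neg, show ξ 0 1 + τ + -(ξ 0 1) = τ from by ring] at habs
          rw [← hτ]; linarith
        have : (1:ℝ) ≤ |ξ 0 1 + τ| := by
          rw [hs] at h3; linarith
        linarith
      have hZn : ‖Z‖ ≤ ‖ξ‖ + s := by
        calc ‖Z‖ ≤ ‖ξ‖ + ‖Matrix.single (0 : Fin 3) 1 τ‖ := norm_add_le _ _
          _ ≤ ‖ξ‖ + |τ| := by gcongr; exact norm_sbm_le 0 1 τ
          _ = ‖ξ‖ + s := by rw [hτ]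
      have hbound : 1 + ‖Z‖ ^ p ≤ (1 + 3 ^ p) * (1 + ‖ξ‖ ^ p) := by
        refine one_add_rpow_le hp1 (norm_nonneg ξ) (norm_nonneg Z) (by norm_num) ?_
        rcases max_cases (1:ℝ) ‖ξ‖ with ⟨he, hle⟩ | ⟨he, hle⟩ <;> rw [he] <;>
          [skip; skip] <;> nlinarith [hvn, hZn, hs0]
      calc G Z ≤ ENNReal.ofReal (c₀ * (1 + 4 ^ p) * (1 + ‖Z‖ ^ p)) := hA Z hcol1
        _ ≤ ENNReal.ofReal (c₀ * (1 + 4 ^ p) * (1 + 3 ^ p) * (1 + ‖ξ‖ ^ p)) := by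
            refine ENNReal.ofReal_le_ofReal ?_
            have h1 : (0:ℝ) ≤ c₀ * (1 + 4 ^ p) := by positivity
            calc c₀ * (1 + 4 ^ p) * (1 + ‖Z‖ ^ p)
                ≤ c₀ * (1 + 4 ^ p) * ((1 + 3 ^ p) * (1 + ‖ξ‖ ^ p)) :=
                  mul_le_mul_of_nonneg_left hbound h1
              _ = c₀ * (1 + 4 ^ p) * (1 + 3 ^ p) * (1 + ‖ξ‖ ^ p) := by ring
    have hmid := midpoint_le hG ξ 0 1 s hs0.ne'
    rw [sub_sbm] at hmid
    refine hmid.trans ?_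
    refine half_half (by positivity) (hkey s (abs_of_pos hs0)) (hkey (-s) ?_)
    rw [abs_neg, abs_of_pos hs0]
  constructor
  · exact ⟨c₀ * (1 + 4 ^ p) * (1 + 3 ^ p), by positivity, hB⟩
  · -- Continuity
    set c := c₀ * (1 + 4 ^ p) * (1 + 3 ^ p) with hcdef
    have hcpos : 0 < c := by positivity
    have hgrow : ∀ ξ : M32, G ξ ≤ ENNReal.ofReal (c * (1 + ‖ξ‖ ^ p)) := hB
    have hfin : ∀ ξ, G ξ ≠ ⊤ := fun ξ =>
      ne_top_of_le_ne_top ENNReal.ofReal_ne_top (hgrow ξ)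
    set f : M32 → ℝ := fun ξ => (G ξ).toReal with hfdef
    have hGf : ∀ ξ, G ξ = ENNReal.ofReal (f ξ) := fun ξ =>
      (ENNReal.ofReal_toReal (hfin ξ)).symm
    have hf0 : ∀ ξ, 0 ≤ f ξ := fun ξ => ENNReal.toReal_nonneg
    have hfb : ∀ ξ, f ξ ≤ c * (1 + ‖ξ‖ ^ p) := fun ξ =>
      ENNReal.toReal_le_of_le_ofReal (by positivity) (hgrow ξ)
    -- Lipschitz estimate around each point
    have hlip : ∀ ξ₀ ξ η : M32, dist ξ ξ₀ ≤ 1 → dist η ξ₀ ≤ 1 →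
        |f η - f ξ| ≤ 6 * (c * (1 + (‖ξ₀‖ + 3) ^ p)) * ‖η - ξ‖ := by
      intro ξ₀ ξ η hξc hηc
      set M := c * (1 + (‖ξ₀‖ + 3) ^ p) with hMdef
      have hM0 : 0 ≤ M := by positivity
      have hMb : ∀ Z : M32, (∀ i j, |Z i j - ξ₀ i j| ≤ 3) → f Z ≤ M := by
        intro Z hZc
        refine (hfb Z).trans ?_
        have hZn : ‖Z‖ ≤ ‖ξ₀‖ + 3 := by
          refine (Matrix.norm_le_iff (by positivity)).2 fun i j => ?_
          have h1 : ‖ξ₀ i j‖ ≤ ‖ξ₀‖ := Matrix.norm_entry_le_entrywise_sup_norm ξ₀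
          have h2 := hZc i j
          rw [Real.norm_eq_abs] at h1 ⊢
          have h3 : |Z i j| - |ξ₀ i j| ≤ |Z i j - ξ₀ i j| := by
            have := abs_sub_abs_le_abs_sub (Z i j) (ξ₀ i j)
            linarith
          linarith
        rw [hMdef]
        have : ‖Z‖ ^ p ≤ (‖ξ₀‖ + 3) ^ p :=
          Real.rpow_le_rpow (norm_nonneg Z) hZn (by linarith)
        nlinarith
      have hentry : ∀ (i : Fin 3) (j : Fin 2), |η i j - ξ i j| ≤ ‖η - ξ‖ := by
        intro i j
        have := Matrix.norm_entry_le_entrywise_sup_norm (η - ξ) (i := i) (j := j)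
        simpa [Matrix.sub_apply, Real.norm_eq_abs] using this
      have hclose : ∀ Z : M32, dist Z ξ₀ ≤ 1 → ∀ i j, |Z i j - ξ₀ i j| ≤ 1 := by
        intro Z hZ i j
        have h1 := Matrix.norm_entry_le_entrywise_sup_norm (Z - ξ₀) (i := i) (j := j)
        rw [dist_eq_norm] at hZ
        simp only [Matrix.sub_apply, Real.norm_eq_abs] at h1
        linarith
      classical
      set mix : Finset (Fin 3 × Fin 2) → M32 := fun s =>
        Matrix.of fun i j => if (i, j) ∈ s then η i j else ξ i j with hmixdef
      have hstep : ∀ s : Finset (Fin 3 × Fin 2),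
          |f (mix s) - f ξ| ≤ M * s.card * ‖η - ξ‖ := by
        intro s
        induction s using Finset.induction_on with
        | empty =>
            have he : mix ∅ = ξ := by
              ext i j; simp [hmixdef]
            simp [he]
        | @insert q s hq ih =>
            set E := Matrix.single q.1 q.2 (1:ℝ) with hEdef
            set B : M32 := Matrix.of fun i' j' =>
              if (i', j') = q then 0 else mix s i' j' with hBdef
            have hEentry : ∀ i' j', E i' j' = if (i', j') = q then (1:ℝ) else 0 := by
              intro i' j'
              simp only [hEdef, Matrix.single, Matrix.of_apply, Prod.ext_iff]
              congr 1
              simp [eq_comm, and_comm]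
            have h1 : mix s = B + (ξ q.1 q.2) • E := by
              ext i' j'
              simp only [hmixdef, hBdef, Matrix.add_apply, Matrix.of_apply, Matrix.smul_apply,
                hEentry, smul_eq_mul]
              rcases eq_or_ne (i', j') q with he | hne
              · subst he
                rw [if_pos rfl, if_pos rfl, if_neg hq]
                simp
              · rw [if_neg hne, if_neg hne]
                ring
            have h2 : mix (insert q s) = B + (η q.1 q.2) • E := by
              ext i' j'
              simp only [hmixdef, hBdef, Matrix.add_apply, Matrix.of_apply, Matrix.smul_apply,
                hEentry, smul_eq_mul]
              rcases eq_or_ne (i', j') q with he | hne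
              · subst he
                rw [if_pos (Finset.mem_insert_self _ _), if_pos rfl, if_pos rfl]
                simp
              · rw [if_neg hne, if_neg hne]
                simp only [Finset.mem_insert, hne, false_or]
                ring
            have hgconv := slice_convexOn hG hfin B q.1 q.2
            have hbnd : ∀ x ∈ Set.Icc (ξ₀ q.1 q.2 - 3) (ξ₀ q.1 q.2 + 3),
                (fun x : ℝ => (G (B + x • E)).toReal) x ≤ M := by
              intro x hx
              refine hMb _ fun i j => ?_
              have hBE : (B + x • E) i j
                  = (if (i, j) = q then 0 else mix s i j) + x * (if (i, j) = q then 1 else 0) := by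
                simp only [hBdef, Matrix.add_apply, Matrix.of_apply, Matrix.smul_apply, hEentry,
                  smul_eq_mul]
              rcases eq_or_ne (i, j) q with he | hne
              · subst he
                rw [hBE, if_pos rfl, if_pos rfl]
                rw [show (0:ℝ) + x * 1 = x by ring]
                rw [abs_le]
                exact ⟨by linarith [hx.1], by linarith [hx.2]⟩
              · rw [hBE, if_neg hne, if_neg hne]
                have hmx : mix s i j = if (i, j) ∈ s then η i j else ξ i j := by
                  simp [hmixdef]
                rw [show mix s i j + x * 0 = mix s i j by ring, hmx]
                split
                · linarith [hclose η hηc i j]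
                · linarith [hclose ξ hξc i j]
            have hyc := hclose ξ hξc q.1 q.2
            have hzc := hclose η hηc q.1 q.2
            rw [abs_le] at hyc hzc
            have hlip1 := lip1d hgconv (fun x => ENNReal.toReal_nonneg) hbnd
              (y := ξ q.1 q.2) (z := η q.1 q.2)
              ⟨by linarith [hyc.1], by linarith [hyc.2]⟩
              ⟨by linarith [hzc.1], by linarith [hzc.2]⟩
            have hgz : (G (B + (η q.1 q.2) • E)).toReal = f (mix (insert q s)) := by
              rw [h2]
            have hgy : (G (B + (ξ q.1 q.2) • E)).toReal = f (mix s) := by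
              rw [h1]
            rw [hgz, hgy] at hlip1
            have hd := hentry q.1 q.2
            have hstep1 : |f (mix (insert q s)) - f (mix s)| ≤ M * ‖η - ξ‖ := by
              exact hlip1.trans (mul_le_mul_of_nonneg_left hd hM0)
            have htri : |f (mix (insert q s)) - f ξ|
                ≤ |f (mix (insert q s)) - f (mix s)| + |f (mix s) - f ξ| := abs_sub_le _ _ _
            have hcard : (insert q s).card = s.card + 1 := Finset.card_insert_of_notMem hq
            rw [hcard]
            push_cast
            have hexp : M * ((s.card : ℝ) + 1) * ‖η - ξ‖
                = M * (s.card : ℝ) * ‖η - ξ‖ + M * ‖η - ξ‖ := by ring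
            rw [hexp]
            linarith [htri, hstep1, ih]
      have huniv : mix Finset.univ = η := by
        ext i j; simp [hmixdef]
      have h6 : ((Finset.univ : Finset (Fin 3 × Fin 2)).card : ℝ) = 6 := by
        simp [Finset.card_univ]
      have hfinal := hstep Finset.univ
      rw [huniv] at hfinal
      rw [h6] at hfinal
      calc |f η - f ξ| ≤ M * 6 * ‖η - ξ‖ := hfinal
        _ = 6 * M * ‖η - ξ‖ := by ring
    -- conclude continuity
    have hfc : Continuous f := by
      rw [continuous_iff_continuousAt]
      intro ξ₀
      refine Metric.continuousAt_iff.2 ?_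
      intro ε hε
      set L := 6 * (c * (1 + (‖ξ₀‖ + 3) ^ p)) with hLdef
      have hL0 : 0 ≤ L := by positivity
      refine ⟨min 1 (ε / (L + 1)), by positivity, fun {x} hx => ?_⟩
      have hx1 : dist x ξ₀ ≤ 1 := le_trans hx.le (min_le_left _ _)
      have hx2 : dist x ξ₀ < ε / (L + 1) := lt_of_lt_of_le hx (min_le_right _ _)
      have h1 := hlip ξ₀ ξ₀ x (by simp) hx1
      rw [Real.dist_eq]
      have h2 : ‖x - ξ₀‖ = dist x ξ₀ := (dist_eq_norm x ξ₀).symm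
      rw [h2] at h1
      have h3 : (L + 1) * (ε / (L + 1)) = ε := mul_div_cancel₀ ε (by linarith)
      have hd0 : 0 ≤ dist x ξ₀ := dist_nonneg
      calc |f x - f ξ₀| ≤ L * dist x ξ₀ := h1
        _ ≤ (L + 1) * dist x ξ₀ := by nlinarith
        _ < (L + 1) * (ε / (L + 1)) := by
            have : (0:ℝ) < L + 1 := by linarith
            exact mul_lt_mul_of_pos_left hx2 this
        _ = ε := h3
    have : G = fun ξ => ENNReal.ofReal (f ξ) := funext hGf
    rw [hGdef] at this ⊢
    rw [this]
    exact ENNReal.continuous_ofReal.comp hfc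


end
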